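/- Let γ₁, γ₂ be modulus functions and suppose there exist a, b, δ > 0 such that a ≤ γ₁(t)/γ₂(t) ≤ b for all 0 < t < δ. Then the associated density topologies coincide: τ_{γ₁} = τ_{γ₂}. -/

import Mathlib

open MeasureTheory Set Filter Topology

/-- γ is a modulus function (on [0,∞); values and hypotheses only matter for nonnegative arguments). -/
def IsModulus (γ : ℝ → ℝ) : Prop :=
  (∀ a, 0 ≤ a → 0 ≤ γ a) ∧
  (∀ a, 0 ≤ a → (γ a = 0 ↔ a = 0)) ∧
  (∀ a b, 0 ≤ a → 0 ≤ b → γ (a + b) ≤ γ a + γ b) ∧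
  ContinuousWithinAt γ (Set.Ici 0) 0 ∧
  (∀ a b, 0 ≤ a → a ≤ b → γ a ≤ γ b)

/-- |(x-α, x+α) ∩ Aᶜ| -/
noncomputable def mInt (A : Set ℝ) (x α : ℝ) : ℝ :=
  (volume (Set.Ioo (x - α) (x + α) ∩ Aᶜ)).toReal

/-- x is a γ-density point of A. -/
def IsGammaDensityPt (γ : ℝ → ℝ) (A : Set ℝ) (x : ℝ) : Prop :=
  Tendsto (fun α => γ (mInt A x α) / γ (2 * α)) (𝓝[>] (0:ℝ)) (𝓝 0)

/-- x is a Lebesgue density point of A. -/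
def IsLebDensityPt (A : Set ℝ) (x : ℝ) : Prop :=
  Tendsto (fun α => mInt A x α / (2 * α)) (𝓝[>] (0:ℝ)) (𝓝 0)

/-- The γ-density family. -/
def Tgamma (γ : ℝ → ℝ) : Set (Set ℝ) :=
  {A : Set ℝ | MeasurableSet A ∧ A ⊆ {x : ℝ | IsGammaDensityPt γ A x}}

lemma mInt_nonneg (A : Set ℝ) (x α : ℝ) : 0 ≤ mInt A x α := ENNReal.toReal_nonneg

lemma mInt_le (A : Set ℝ) (x α : ℝ) (hα : 0 < α) : mInt A x α ≤ 2 * α := by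
  have h : volume (Set.Ioo (x - α) (x + α) ∩ Aᶜ) ≤ ENNReal.ofReal (2 * α) := by
    calc volume (Set.Ioo (x - α) (x + α) ∩ Aᶜ) ≤ volume (Set.Ioo (x - α) (x + α)) :=
          measure_mono inter_subset_left
      _ = ENNReal.ofReal (2 * α) := by rw [Real.volume_Ioo]; ring_nf
  exact ENNReal.toReal_le_of_le_ofReal (by positivity) h

lemma transfer (γ₁ γ₂ : ℝ → ℝ) (h₁ : IsModulus γ₁) (h₂ : IsModulus γ₂)
    (a b δ : ℝ) (ha : 0 < a) (hb : 0 < b) (hδ : 0 < δ)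
    (hcomp : ∀ t : ℝ, 0 < t → t < δ → a ≤ γ₁ t / γ₂ t ∧ γ₁ t / γ₂ t ≤ b)
    (A : Set ℝ) (x : ℝ) (h : IsGammaDensityPt γ₁ A x) : IsGammaDensityPt γ₂ A x := by
  have hpos2 : ∀ t : ℝ, 0 < t → 0 < γ₂ t := fun t ht => by
    rcases lt_or_eq_of_le (h₂.1 t ht.le) with h' | h'
    · exact h'
    · exact absurd (((h₂.2.1 t ht.le).mp h'.symm)) ht.ne'
  have hpos1 : ∀ t : ℝ, 0 < t → 0 < γ₁ t := fun t ht => by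
    rcases lt_or_eq_of_le (h₁.1 t ht.le) with h' | h'
    · exact h'
    · exact absurd (((h₁.2.1 t ht.le).mp h'.symm)) ht.ne'
  have hlim : Tendsto (fun α => (b / a) * (γ₁ (mInt A x α) / γ₁ (2 * α)))
      (𝓝[>] (0:ℝ)) (𝓝 0) := by
    have := h.const_mul (b / a)
    simpa using this
  apply squeeze_zero' ?_ ?_ hlim
  · filter_upwards [self_mem_nhdsWithin] with α (hα : 0 < α)
    exact div_nonneg (h₂.1 _ (mInt_nonneg A x α)) (h₂.1 _ (by positivity))
  · filter_upwards [Ioo_mem_nhdsGT_of_mem (by constructor <;> [rfl; positivity] :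
      (0:ℝ) ∈ Set.Ico 0 (δ / 2))] with α hα
    obtain ⟨hα0, hαδ⟩ := hα
    set m := mInt A x α with hm
    have hm0 : 0 ≤ m := mInt_nonneg A x α
    have hmle : m ≤ 2 * α := mInt_le A x α hα0
    have h2α : 0 < 2 * α := by positivity
    have h2αδ : 2 * α < δ := by linarith
    have hγ₂2α : 0 < γ₂ (2 * α) := hpos2 _ h2α
    have hγ₁2α : 0 < γ₁ (2 * α) := hpos1 _ h2α
    -- γ₁(2α) ≤ b * γ₂(2α)
    have hub : γ₁ (2 * α) ≤ b * γ₂ (2 * α) := by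
      have := (hcomp (2 * α) h2α h2αδ).2
      rw [div_le_iff₀ hγ₂2α] at this; exact this
    rcases eq_or_lt_of_le hm0 with h0 | h0
    · have : γ₂ m = 0 := (h₂.2.1 m hm0).mpr h0.symm
      rw [this, zero_div]
      have h1m : 0 ≤ γ₁ (mInt A x α) := h₁.1 _ (mInt_nonneg A x α)
      positivity
    · have hmδ : m < δ := lt_of_le_of_lt hmle h2αδ
      have hγ₂m : 0 < γ₂ m := hpos2 _ h0
      have hlb : a * γ₂ m ≤ γ₁ m := by
        have := (hcomp m h0 hmδ).1
        rw [le_div_iff₀ hγ₂m] at this; linarith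
      have hγ₁m : 0 ≤ γ₁ m := h₁.1 m hm0
      have key : γ₂ m / γ₂ (2 * α) ≤ (γ₁ m / a) / (γ₁ (2 * α) / b) := by
        gcongr
        · rw [le_div_iff₀ ha]; linarith
        · rw [div_le_iff₀ hb]; linarith
      calc γ₂ m / γ₂ (2 * α) ≤ (γ₁ m / a) / (γ₁ (2 * α) / b) := key
        _ = (b / a) * (γ₁ m / γ₁ (2 * α)) := by field_simp

theorem stmt15 (γ₁ γ₂ : ℝ → ℝ) (h₁ : IsModulus γ₁) (h₂ : IsModulus γ₂)
    (a b δ : ℝ) (ha : 0 < a) (hb : 0 < b) (hδ : 0 < δ)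
    (hcomp : ∀ t : ℝ, 0 < t → t < δ → a ≤ γ₁ t / γ₂ t ∧ γ₁ t / γ₂ t ≤ b) :
    Tgamma γ₁ = Tgamma γ₂ := by
  have hpos2 : ∀ t : ℝ, 0 < t → 0 < γ₂ t := fun t ht => by
    rcases lt_or_eq_of_le (h₂.1 t ht.le) with h' | h'
    · exact h'
    · exact absurd (((h₂.2.1 t ht.le).mp h'.symm)) ht.ne'
  have hcomp' : ∀ t : ℝ, 0 < t → t < δ → 1/b ≤ γ₂ t / γ₁ t ∧ γ₂ t / γ₁ t ≤ 1/a := by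
    intro t ht htδ
    obtain ⟨hl, hu⟩ := hcomp t ht htδ
    have h2 : 0 < γ₂ t := hpos2 t ht
    have h1 : 0 < γ₁ t := by
      have : a * γ₂ t ≤ γ₁ t := by rw [le_div_iff₀ h2] at hl; linarith
      nlinarith
    constructor
    · rw [div_le_iff₀ h2] at hu
      rw [div_le_div_iff₀ hb h1]
      linarith
    · rw [le_div_iff₀ h2] at hl
      rw [div_le_div_iff₀ h1 ha]
      linarith
  ext A
  constructor
  · rintro ⟨hA, hd⟩
    exact ⟨hA, fun x hx => transfer γ₁ γ₂ h₁ h₂ a b δ ha hb hδ hcomp A x (hd hx)⟩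
  · rintro ⟨hA, hd⟩
    exact ⟨hA, fun x hx => transfer γ₂ γ₁ h₂ h₁ (1/b) (1/a) δ (by positivity) (by positivity)
      hδ hcomp' A x (hd hx)⟩
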